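/- (Tarski) If F is a (2^ℵ₀)⁺-complete, ℵ₁-saturated filter over a set S, then there is an F-positive set X ⊆ S such that F↾X is an ultrafilter. -/

import Mathlib

open Cardinal

namespace TarskiAux

universe u v

variable {S : Type u}

/-- `X` is `F`-positive. -/
def Pos (F : Filter S) (X : Set S) : Prop := ∀ Y ∈ F, (X ∩ Y).Nonempty

theorem pos_iff {F : Filter S} {X : Set S} : Pos F X ↔ Xᶜ ∉ F := by
  constructor
  · intro h hc
    rcases h Xᶜ hc with ⟨x, hx, hxc⟩
    exact hxc hx
  · intro h Y hY
    by_contra hne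
    apply h
    apply F.sets_of_superset hY
    intro y hy
    by_contra hyX
    exact hne ⟨y, not_not.mp hyX, hy⟩

theorem pos_mono {F : Filter S} {X X' : Set S} (h : X ⊆ X') (hX : Pos F X) : Pos F X' :=
  fun Y hY => ((hX Y hY).mono (Set.inter_subset_inter_left Y h))

section Tree

variable {O : Type v} [LinearOrder O] [WellFoundedLT O] (spl : Set S → Set S)

/-- The transfinite splitting function: `treeC spl α x` records on which side of the
splitting of the class of `x` at level `α` the point `x` falls. -/
noncomputable def treeC : O → S → Prop :=
  IsWellFounded.fix (α := O) (· < ·)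
    (fun α ih x => x ∈ spl {y | ∀ β (h : β < α), (ih β h y ↔ ih β h x)})

/-- The class of `x` at level `α`. -/
def cls (α : O) (x : S) : Set S := {y | ∀ β < α, (treeC spl β y ↔ treeC spl β x)}

theorem treeC_def (α : O) (x : S) : treeC spl α x ↔ x ∈ spl (cls spl α x) := by
  conv_lhs => rw [treeC, IsWellFounded.fix_eq]
  rfl

theorem mem_cls_self (α : O) (x : S) : x ∈ cls spl α x := fun β _ => Iff.rfl

theorem cls_eq_of_mem {α : O} {x y : S} (h : y ∈ cls spl α x) :
    cls spl α y = cls spl α x := by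
  ext z
  exact ⟨fun hz β hβ => (hz β hβ).trans (h β hβ), fun hz β hβ => (hz β hβ).trans (h β hβ).symm⟩

end Tree

/-- The core construction: from a splitting function one gets `ℵ₁` many pairwise
disjoint positive sets. -/
theorem exists_disjoint_family (F : Filter S) [F.NeBot]
    (hcomp : ∀ (ι : Type u) (g : ι → Set S),
      Cardinal.mk ι < Order.succ Cardinal.continuum →
      (∀ i, g i ∈ F) → (⋂ i, g i) ∈ F)
    (spl : Set S → Set S)
    (hspl : ∀ X : Set S, Pos F X → Pos F (X ∩ spl X) ∧ Pos F (X ∩ (spl X)ᶜ)) :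
    ∃ Q : (Cardinal.aleph.{u} 1).ord.ToType → Set S,
      (∀ i, Pos F (Q i)) ∧ ∀ i j, i ≠ j → Q i ∩ Q j = ∅ := by
  set O := (Cardinal.aleph.{u} 1).ord.ToType with hO
  -- the sets M α of points whose class at level α is positive, as filter members
  have hcard : ∀ α : O, (Cardinal.mk (Set (Set.Iio α))) < Order.succ Cardinal.continuum := by
    intro α
    rw [Order.lt_succ_iff, mk_set, ← two_power_aleph0]
    apply power_le_power_left two_ne_zero
    exact Order.lt_succ_iff.mp
      (lt_of_lt_of_eq (Cardinal.mk_Iio_ord_toType α) succ_aleph0.symm)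
  have hM : ∀ α : O, ∃ M ∈ F, M ⊆ {x | Pos F (cls spl α x)} := by
    intro α
    set C : Set (Set.Iio α) → Set S := fun T =>
      {y | ∀ β (h : β < α), (treeC spl β y ↔ (⟨β, h⟩ : Set.Iio α) ∈ T)} with hC
    refine ⟨⋂ T : Set (Set.Iio α), {y | y ∈ C T ∧ ¬ Pos F (C T)}ᶜ, ?_, ?_⟩
    · apply hcomp _ _ (hcard α)
      intro T
      by_cases h : Pos F (C T)
      · have : {y | y ∈ C T ∧ ¬ Pos F (C T)}ᶜ = Set.univ := by
          ext y; simp [h]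
        rw [this]; exact Filter.univ_mem
      · have hmem : (C T)ᶜ ∈ F := not_not.mp (fun hc => h (pos_iff.mpr hc))
        apply F.sets_of_superset hmem
        intro y hy hy'
        exact hy hy'.1
    · intro x hx
      have hx' := Set.mem_iInter.mp hx {β : Set.Iio α | treeC spl β.1 x}
      have hxC : x ∈ C {β : Set.Iio α | treeC spl β.1 x} := fun β h => Iff.rfl
      have hCeq : C {β : Set.Iio α | treeC spl β.1 x} = cls spl α x := rfl
      by_contra hpos
      rw [hCeq] at hx' hxC
      exact hx' ⟨hxC, hpos⟩
  choose M hMF hMpos using hM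
  have hG : (⋂ α : O, M α) ∈ F := by
    apply hcomp _ _ ?_ hMF
    rw [hO, mk_ord_toType]
    exact Order.lt_succ_iff.mpr aleph_one_le_continuum
  obtain ⟨x₀, hx₀⟩ := F.nonempty_of_mem hG
  have hPos : ∀ α : O, Pos F (cls spl α x₀) := fun α => hMpos α (Set.mem_iInter.mp hx₀ α)
  refine ⟨fun α => cls spl α x₀ ∩ {y | ¬ (treeC spl α y ↔ treeC spl α x₀)}, ?_, ?_⟩
  · intro α
    obtain ⟨h1, h2⟩ := hspl _ (hPos α)
    by_cases hx : treeC spl α x₀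
    · refine pos_mono ?_ h2
      rintro y ⟨hyP, hyn⟩
      refine ⟨hyP, fun hiff => ?_⟩
      have hty : treeC spl α y := hiff.mpr hx
      rw [treeC_def, cls_eq_of_mem spl hyP] at hty
      exact hyn hty
    · refine pos_mono ?_ h1
      rintro y ⟨hyP, hys⟩
      refine ⟨hyP, fun hiff => hx (hiff.mp ?_)⟩
      rw [treeC_def, cls_eq_of_mem spl hyP]
      exact hys
  · intro i j hne
    apply Set.eq_empty_iff_forall_notMem.mpr
    rintro y ⟨⟨hi1, hi2⟩, hj1, hj2⟩
    rcases hne.lt_or_gt with h | h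
    · exact hi2 (hj1 i h)
    · exact hj2 (hi1 j h)

theorem aleph_one_toType_emb :
    Nonempty ((Cardinal.aleph.{v} 1).ord.ToType ↪ (Cardinal.aleph.{u} 1).ord.ToType) := by
  rw [← Cardinal.lift_mk_le', mk_ord_toType, mk_ord_toType, lift_aleph, lift_aleph,
    Ordinal.lift_one, Ordinal.lift_one]

end TarskiAux

/-- **Tarski, ZFC.** If `F` is a `(2^ℵ₀)⁺`-complete, `ℵ₁`-saturated filter
over a set `S`, then there is an `F`-positive set `X ⊆ S` such that
`F↾X = {Y : Y ∪ (S \ X) ∈ F}` is an ultrafilter.  Here `X` is `F`-positive iff it meets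
every member of `F`; `F` is `(2^ℵ₀)⁺`-complete iff it is closed under intersections of
fewer than `(2^ℵ₀)⁺` (i.e. at most continuum many) of its members; and `F` is
`ℵ₁`-saturated iff among any `ω₁`-indexed family of positive sets two have positive
intersection. -/
theorem tarski_saturated_filter {S : Type u} (F : Filter S) [F.NeBot]
    (hcomp : ∀ (ι : Type u) (g : ι → Set S),
      Cardinal.mk ι < Order.succ Cardinal.continuum →
      (∀ i, g i ∈ F) → (⋂ i, g i) ∈ F)
    (hsat : ∀ Xf : (Cardinal.aleph 1).ord.ToType → Set S,
      (∀ i, ∀ Y ∈ F, (Xf i ∩ Y).Nonempty) →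
      ∃ i j, i ≠ j ∧ ∀ Y ∈ F, ((Xf i ∩ Xf j) ∩ Y).Nonempty) :
    ∃ X : Set S, (∀ Y ∈ F, (X ∩ Y).Nonempty) ∧
      ∀ Y : Set S, Y ∪ Xᶜ ∈ F ∨ Yᶜ ∪ Xᶜ ∈ F := by
  by_contra hcon
  push_neg at hcon
  have hsplit : ∀ X : Set S, TarskiAux.Pos F X →
      ∃ Y, TarskiAux.Pos F (X ∩ Y) ∧ TarskiAux.Pos F (X ∩ Yᶜ) := by
    intro X hX
    obtain ⟨Y, h1, h2⟩ := hcon X hX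
    refine ⟨Y, ?_, ?_⟩
    · rw [TarskiAux.pos_iff, Set.compl_inter, Set.union_comm]
      exact h2
    · rw [TarskiAux.pos_iff, Set.compl_inter, compl_compl, Set.union_comm]
      exact h1
  choose! spl hspl using hsplit
  obtain ⟨Q, hQpos, hQdis⟩ := TarskiAux.exists_disjoint_family F hcomp spl hspl
  obtain ⟨e⟩ := TarskiAux.aleph_one_toType_emb.{u, _}
  obtain ⟨i, j, hne, hpos⟩ := hsat (fun i => Q (e i)) (fun i => hQpos (e i))
  have hdis := hQdis (e i) (e j) (fun h => hne (e.injective h))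
  have := hpos Set.univ Filter.univ_mem
  rw [hdis] at this
  simp at this
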